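/- Let Ω = Σ_{2≤i<j≤8} f_{i,j} ∧ f_{i,j} be the 4-form on ℝ⁸ built from the 21 explicit 2-forms f_{i,j} listed in the paper (e.g., f_{2,3} = dx₁∧dx₄ + dx₂∧dx₃ + dx₅∧dx₈ + dx₆∧dx₇, etc.). Then Ω ∧ Ω = 504 · dx₁∧dx₂∧⋯∧dx₈; in particular Ω is nondegenerate. -/

import Mathlib

open ExteriorAlgebra

set_option maxHeartbeats 1000000

noncomputable section

/-- The exterior algebra of ℝ⁸. -/
abbrev Ext8 := ExteriorAlgebra ℝ (Fin 8 → ℝ)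

open Fin.NatCast in
/-- dx_n, 1-indexed (n = 1,…,8). -/
def d (n : ℕ) : Ext8 := ι ℝ (Pi.single ((n - 1 : ℕ) : Fin 8) (1 : ℝ))

/-- The 2-forms f_{i,j}, 2 ≤ i < j ≤ 8, from the paper. -/
def fm : ℕ → ℕ → Ext8 := fun i j =>
  match i, j with
  | 2, 3 => d 1 * d 4 + d 2 * d 3 + d 5 * d 8 + d 6 * d 7
  | 2, 4 => -(d 1 * d 3) + d 2 * d 4 + d 5 * d 7 - d 6 * d 8
  | 2, 5 => d 1 * d 6 + d 2 * d 5 - d 3 * d 8 - d 4 * d 7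
  | 2, 6 => -(d 1 * d 5) + d 2 * d 6 - d 3 * d 7 + d 4 * d 8
  | 2, 7 => d 1 * d 8 + d 2 * d 7 + d 3 * d 6 + d 4 * d 5
  | 2, 8 => -(d 1 * d 7) + d 2 * d 8 + d 3 * d 5 - d 4 * d 6
  | 3, 4 => d 1 * d 2 + d 3 * d 4 - d 5 * d 6 - d 7 * d 8
  | 3, 5 => d 1 * d 7 + d 2 * d 8 + d 3 * d 5 + d 4 * d 6
  | 3, 6 => -(d 1 * d 8) + d 2 * d 7 + d 3 * d 6 - d 4 * d 5
  | 3, 7 => -(d 1 * d 5) - d 2 * d 6 + d 3 * d 7 + d 4 * d 8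
  | 3, 8 => d 1 * d 6 - d 2 * d 5 + d 3 * d 8 - d 4 * d 7
  | 4, 5 => -(d 1 * d 8) + d 2 * d 7 - d 3 * d 6 + d 4 * d 5
  | 4, 6 => -(d 1 * d 7) - d 2 * d 8 + d 3 * d 5 + d 4 * d 6
  | 4, 7 => d 1 * d 6 - d 2 * d 5 - d 3 * d 8 + d 4 * d 7
  | 4, 8 => d 1 * d 5 + d 2 * d 6 + d 3 * d 7 + d 4 * d 8
  | 5, 6 => d 1 * d 2 - d 3 * d 4 + d 5 * d 6 - d 7 * d 8
  | 5, 7 => d 1 * d 3 + d 2 * d 4 + d 5 * d 7 + d 6 * d 8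
  | 5, 8 => -(d 1 * d 4) + d 2 * d 3 + d 5 * d 8 - d 6 * d 7
  | 6, 7 => -(d 1 * d 4) + d 2 * d 3 - d 5 * d 8 + d 6 * d 7
  | 6, 8 => -(d 1 * d 3) - d 2 * d 4 + d 5 * d 7 + d 6 * d 8
  | 7, 8 => d 1 * d 2 - d 3 * d 4 - d 5 * d 6 + d 7 * d 8
  | _, _ => 0

/-- The list of pairs 2 ≤ i < j ≤ 8. -/
def pairList : List (ℕ × ℕ) :=
  [(2,3),(2,4),(2,5),(2,6),(2,7),(2,8),(3,4),(3,5),(3,6),(3,7),(3,8),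
   (4,5),(4,6),(4,7),(4,8),(5,6),(5,7),(5,8),(6,7),(6,8),(7,8)]

/-- The Spin(7)-invariant 4-form Ω = Σ_{2≤i<j≤8} f_{i,j} ∧ f_{i,j}. -/
def Omega : Ext8 := (pairList.map (fun p => fm p.1 p.2 * fm p.1 p.2)).sum

lemma d_sq (n : ℕ) : d n * d n = 0 := ι_sq_zero _
lemma d_sq' (n : ℕ) (x : Ext8) : d n * (d n * x) = 0 := by
  rw [← mul_assoc, d_sq, zero_mul]
open Fin.NatCast in
lemma d_swap (m n : ℕ) (_h : n < m) : d m * d n = -(d n * d m) := by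
  have h := ι_add_mul_swap (R := ℝ) (M := Fin 8 → ℝ)
    (Pi.single ((m - 1 : ℕ) : Fin 8) (1 : ℝ)) (Pi.single ((n - 1 : ℕ) : Fin 8) (1 : ℝ))
  unfold d
  linear_combination (norm := noncomm_ring) h
lemma d_swap' (m n : ℕ) (x : Ext8) (h : n < m) : d m * (d n * x) = -(d n * (d m * x)) := by
  rw [← mul_assoc, d_swap m n h, neg_mul, mul_assoc]
lemma omega_eq : Omega =
    (-6 : ℝ) • (d 1*d 2*d 3*d 4) +
    (-6 : ℝ) • (d 1*d 2*d 5*d 6) +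
    (-6 : ℝ) • (d 1*d 2*d 7*d 8) +
    (-6 : ℝ) • (d 1*d 3*d 5*d 7) +
    (6 : ℝ) • (d 1*d 3*d 6*d 8) +
    (6 : ℝ) • (d 1*d 4*d 5*d 8) +
    (6 : ℝ) • (d 1*d 4*d 6*d 7) +
    (6 : ℝ) • (d 2*d 3*d 5*d 8) +
    (6 : ℝ) • (d 2*d 3*d 6*d 7) +
    (6 : ℝ) • (d 2*d 4*d 5*d 7) +
    (-6 : ℝ) • (d 2*d 4*d 6*d 8) +
    (-6 : ℝ) • (d 3*d 4*d 5*d 6) +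
    (-6 : ℝ) • (d 3*d 4*d 7*d 8) +
    (-6 : ℝ) • (d 5*d 6*d 7*d 8) := by

  unfold Omega pairList fm
  simp only [List.map_cons, List.map_nil, List.sum_cons, List.sum_nil, sub_eq_add_neg,
    mul_add, add_mul, neg_mul, mul_neg, neg_neg, mul_assoc, neg_add_rev]
  simp only [d_sq, d_sq', d_swap, d_swap', mul_neg, neg_neg, mul_zero, zero_mul, neg_zero,
    add_zero, zero_add, Nat.reduceLT]
  module
/-- Ω ∧ Ω = 504 · dx₁∧dx₂∧⋯∧dx₈; in particular Ω is nondegenerate. -/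
theorem Omega_wedge_Omega :
    Omega * Omega = (504 : ℝ) • (d 1 * d 2 * d 3 * d 4 * d 5 * d 6 * d 7 * d 8) := by
  rw [omega_eq]
  simp only [mul_add, add_mul, smul_mul_assoc, mul_smul_comm, smul_smul, mul_assoc]
  simp only [d_sq, d_sq', d_swap, d_swap', mul_neg, neg_neg, mul_zero, smul_neg, smul_zero,
    neg_zero, add_zero, zero_add, neg_add_rev, Nat.reduceLT]
  module


end
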